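/- arXiv:2504.10787 — 4 statements merged into one kernel-verified Lean document; each statement's English description precedes it below -/
import Mathlib

section
/- Let a_1 a_2 … a_k be a finite greedy β-expansion of 1 for some β ∈ (1,2) (so each a_i ∈ {0,1} and a_k = 1) which is reversibly greedy, i.e. a_1a_2…a_k >_lex a_{k−i}a_{k−i−1}…a_2 (padded with trailing zeros to length k) for all 0 ≤ i ≤ k−2. Define b_i = a_i for 1 ≤ i ≤ k−1 and b_k = a_k − 1 = 0. Then the string b_1…b_k also satisfies the reversibility condition: b_1b_2…b_k >_lex b_{k−i}b_{k−i−1}…b_2 (padded with trailing zeros to length k) for all 0 ≤ i ≤ k−2. -/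
open Polynomial

/-- Strict lexicographic order on ℕ-indexed digit sequences:
`a` is lexicographically strictly less than `b`. -/
def LexLt (a b : ℕ → ℕ) : Prop :=
  ∃ m : ℕ, (∀ i < m, a i = b i) ∧ a m < b m

/-- `a` (0-indexed: `a n` is the digit `a_{n+1}` of `β^{-(n+1)}`) is a β-expansion of 1. -/
def IsBetaExpansion (β : ℝ) (a : ℕ → ℕ) : Prop :=
  (∀ n, a n ≤ 1) ∧ HasSum (fun n => (a n : ℝ) / β ^ (n + 1)) 1

/-- `a` is the greedy (lexicographically largest) β-expansion of 1. -/
def IsGreedyExpansion (β : ℝ) (a : ℕ → ℕ) : Prop :=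
  IsBetaExpansion β a ∧ ∀ b, IsBetaExpansion β b → b = a ∨ LexLt b a

/-- A Pisot number: a real algebraic integer `q > 1` all of whose other conjugates
have modulus strictly less than 1. -/
def IsPisot (q : ℝ) : Prop :=
  1 < q ∧ IsIntegral ℤ q ∧
    ∀ z : ℂ, (Polynomial.aeval z) (minpoly ℤ q) = 0 → z ≠ (q : ℂ) → ‖z‖ < 1

/-- A Salem number: a real algebraic integer `α > 1` all of whose other conjugates
have modulus at most 1, with at least one conjugate of modulus exactly 1. -/
def IsSalem (α : ℝ) : Prop :=
  1 < α ∧ IsIntegral ℤ α ∧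
    (∀ z : ℂ, (Polynomial.aeval z) (minpoly ℤ α) = 0 → z ≠ (α : ℂ) → ‖z‖ ≤ 1) ∧
    (∃ z : ℂ, (Polynomial.aeval z) (minpoly ℤ α) = 0 ∧ ‖z‖ = 1)

/-- The shift map `σ(a_1 a_2 a_3 …) = a_2 a_3 …`. -/
def shiftSeq (a : ℕ → ℕ) : ℕ → ℕ := fun n => a (n + 1)

/-- The reversibly greedy condition for the length-`K` string `a_1 … a_K`
(0-indexed: `a 0, …, a (K-1)`): for all `0 ≤ i ≤ K-2`, the string
`a_{K-i} a_{K-i-1} … a_2` (padded with trailing zeros) is lexicographically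
strictly smaller than `a_1 … a_K`. -/
def RevGreedy (a : ℕ → ℕ) (K : ℕ) : Prop :=
  ∀ i ≤ K - 2,
    LexLt (fun n => if n ≤ K - i - 2 then a (K - i - 1 - n) else 0)
          (fun n => if n < K then a n else 0)

/-- `Pcomp a j` is `P_j(x) = x^j - a_1 x^{j-1} - ⋯ - a_j` (digits 0-indexed). -/
noncomputable def Pcomp (a : ℕ → ℕ) (j : ℕ) : Polynomial ℤ :=
  Polynomial.X ^ j - ∑ i ∈ Finset.range j, Polynomial.C ((a i : ℤ)) * Polynomial.X ^ (j - 1 - i)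

/-- The eventually periodic digit sequence `first (w)^ω`. -/
def perSeq (first : ℕ) (w : List ℕ) : ℕ → ℕ :=
  fun n => if n = 0 then first else w.getD ((n - 1) % w.length) 0

/-- The string `a_2 … a_K` (digits 0-indexed). -/
def strTail (a : ℕ → ℕ) (K : ℕ) : List ℕ :=
  List.ofFn fun i : Fin (K - 1) => a ((i : ℕ) + 1)

/-- The full string `a_1 … a_K` (digits 0-indexed). -/
def fullStr (a : ℕ → ℕ) (K : ℕ) : List ℕ :=
  List.ofFn fun i : Fin K => a (i : ℕ)

/-- The block `a_{k+1} … a_{k+ℓ}` (digits 0-indexed). -/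
def perBlock (a : ℕ → ℕ) (k ℓ : ℕ) : List ℕ :=
  List.ofFn fun i : Fin ℓ => a (k + (i : ℕ))

/-- Replace the last digit `a_K` of a finite expansion by `a_K - 1 = 0`. -/
def modLast (a : ℕ → ℕ) (K : ℕ) : ℕ → ℕ := fun i => if i = K - 1 then 0 else a i

/-- The β-transformation `T_β(y) = βy - ⌊βy⌋`. -/
noncomputable def betaT (β y : ℝ) : ℝ := β * y - ⌊β * y⌋

/-- The greedy digits of `x`: `d_{n+1} = ⌊β T_β^n(x)⌋`. -/
noncomputable def greedyDigit (β x : ℝ) (n : ℕ) : ℤ := ⌊β * (betaT β)^[n] x⌋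

private lemma aux_hasSum (β : ℝ) (hβ1 : 1 < β) (hβ2 : β < 2) (y : ℝ) (hy0 : 0 ≤ y)
    (hy1 : y < 1) :
    ∃ d : ℕ → ℕ, (∀ n, d n ≤ 1) ∧ HasSum (fun n => (d n : ℝ) / β ^ (n + 1)) y := by
  have hβ0 : (0:ℝ) < β := lt_trans one_pos hβ1
  set f : ℝ → ℝ := fun t => Int.fract (β * t) with hf
  set Y : ℕ → ℝ := fun n => f^[n] y with hY
  have hYb : ∀ n, 0 ≤ Y n ∧ Y n < 1 := by
    intro n
    induction n with
    | zero => exact ⟨hy0, hy1⟩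
    | succ n ih =>
      have h1 : Y (n+1) = Int.fract (β * Y n) := by
        simp [hY, Function.iterate_succ_apply', hf]
      rw [h1]
      exact ⟨Int.fract_nonneg _, Int.fract_lt_one _⟩
  have hfl0 : ∀ n, 0 ≤ ⌊β * Y n⌋ := fun n =>
    Int.floor_nonneg.2 (mul_nonneg hβ0.le (hYb n).1)
  set d : ℕ → ℕ := fun n => (⌊β * Y n⌋).toNat with hd
  have hdc : ∀ n, (d n : ℝ) = (⌊β * Y n⌋ : ℝ) := by
    intro n; simp only [hd]; exact_mod_cast congrArg (Int.cast : ℤ → ℝ) (Int.toNat_of_nonneg (hfl0 n))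
  have hd1 : ∀ n, d n ≤ 1 := by
    intro n
    have h2 : β * Y n < 2 := by
      calc β * Y n ≤ β * 1 := mul_le_mul_of_nonneg_left (hYb n).2.le hβ0.le
        _ < 2 := by linarith
    have h3 : ⌊β * Y n⌋ < 2 := Int.floor_lt.2 (by exact_mod_cast h2)
    simp only [hd]
    omega
  refine ⟨d, hd1, ?_⟩
  have hYs : ∀ N, Y (N+1) = β * Y N - ⌊β * Y N⌋ := by
    intro N
    have h1 : Y (N+1) = Int.fract (β * Y N) := by
      simp [hY, Function.iterate_succ_apply', hf]
    rw [h1, Int.fract]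
  have hpow : ∀ N : ℕ, (β : ℝ) ^ N ≠ 0 := fun N => pow_ne_zero N (ne_of_gt hβ0)
  have hpart : ∀ N, ∑ n ∈ Finset.range N, (d n : ℝ) / β ^ (n+1) = y - Y N / β ^ N := by
    intro N
    induction N with
    | zero => simp [hY]
    | succ N ih =>
      rw [Finset.sum_range_succ, ih, hdc, hYs]
      generalize ((⌊β * Y N⌋ : ℤ) : ℝ) = F
      rw [pow_succ]
      field_simp
      ring
  rw [hasSum_iff_tendsto_nat_of_nonneg (fun n => by positivity) y]
  have h0 : Filter.Tendsto (fun N => Y N / β ^ N) Filter.atTop (nhds 0) := by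
    apply squeeze_zero (fun n => div_nonneg (hYb n).1 (pow_nonneg hβ0.le n))
      (g := fun n => (1/β) ^ n)
    · intro n
      calc Y n / β ^ n ≤ 1 / β ^ n := by gcongr; exact (hYb n).2.le
        _ = (1/β) ^ n := by rw [div_pow, one_pow]
    · exact tendsto_pow_atTop_nhds_zero_of_lt_one (by positivity)
        (by rw [div_lt_one hβ0]; exact hβ1)
  simp only [hpart]
  have := Filter.Tendsto.sub (tendsto_const_nhds (x := y)) h0
  simpa using this

private lemma first_digit (β : ℝ) (hβ1 : 1 < β) (hβ2 : β < 2) (a : ℕ → ℕ)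
    (hgreedy : IsGreedyExpansion β a) : a 0 = 1 := by
  have hβ0 : (0:ℝ) < β := lt_trans one_pos hβ1
  by_contra h
  have ha0 : a 0 = 0 := by have := hgreedy.1.1 0; omega
  obtain ⟨d, hd1, hds⟩ := aux_hasSum β hβ1 hβ2 (β - 1) (by linarith) (by linarith)
  set b : ℕ → ℕ := fun n => Nat.rec 1 (fun m _ => d m) n with hb
  have hb0 : b 0 = 1 := rfl
  have hbs : ∀ n, b (n+1) = d n := fun n => rfl
  have hbexp : IsBetaExpansion β b := by
    constructor
    · intro n
      cases n with
      | zero => simp [hb0]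
      | succ n => rw [hbs]; exact hd1 n
    · have h2 : HasSum (fun n => (d n : ℝ) / β ^ (n+2)) ((β-1)/β) := by
        have h3 := hds.div_const β
        have hfe : (fun n => (d n : ℝ) / β ^ (n+2)) = (fun i => (d i : ℝ) / β ^ (i + 1) / β) := by
          funext n
          rw [pow_succ]
          ring
        rw [hfe]; exact h3
      have key : HasSum (fun n => (b (n+1) : ℝ) / β ^ (n+1+1))
          (1 - ∑ i ∈ Finset.range 1, (b i : ℝ) / β ^ (i+1)) := by
        simp only [hbs, Finset.sum_range_one, hb0, Nat.cast_one, zero_add, pow_one]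
        have hrw : (1 : ℝ) - 1 / β = (β - 1) / β := by
          field_simp
        rw [hrw]
        exact h2
      exact (hasSum_nat_add_iff' 1).1 key
  rcases hgreedy.2 b hbexp with heq | hlt
  · have : b 0 = a 0 := by rw [heq]
    rw [hb0, ha0] at this; omega
  · obtain ⟨m, hpre, hm⟩ := hlt
    cases m with
    | zero => rw [hb0, ha0] at hm; omega
    | succ m =>
      have := hpre 0 (Nat.succ_pos m)
      rw [hb0, ha0] at this; omega

/-- Proposition 1.9: if a finite greedy β-expansion `a_1 … a_k` of 1
(β ∈ (1,2), digits in {0,1}, `a_k = 1`) is reversibly greedy, then the string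
`b_1 … b_k` with `b_i = a_i` for `i < k` and `b_k = a_k - 1 = 0` also satisfies the
reversibility condition. -/
theorem stmt0 (β : ℝ) (hβ1 : 1 < β) (hβ2 : β < 2) (k : ℕ) (hk : 2 ≤ k)
    (a : ℕ → ℕ) (hdig : ∀ i, a i ≤ 1) (hak : a (k - 1) = 1)
    (hfin : ∀ n, k ≤ n → a n = 0)
    (hgreedy : IsGreedyExpansion β a)
    (hrev : RevGreedy a k) :
    RevGreedy (modLast a k) k := by
  have ha0 : a 0 = 1 := first_digit β hβ1 hβ2 a hgreedy
  intro i hi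
  by_cases hA : modLast a k (k - i - 1) = 0
  · refine ⟨0, fun j hj => absurd hj (Nat.not_lt_zero j), ?_⟩
    show (if (0:ℕ) ≤ k - i - 2 then modLast a k (k - i - 1 - 0) else 0) <
      (if 0 < k then modLast a k 0 else 0)
    rw [if_pos (Nat.zero_le _), if_pos (by omega : 0 < k)]
    have hml0 : modLast a k 0 = 1 := by
      simp only [modLast]
      rw [if_neg (by omega : (0:ℕ) ≠ k - 1)]
      exact ha0
    rw [Nat.sub_zero, hA, hml0]
    omega
  · -- modLast a k (k - i - 1) = 1, so k - i - 1 ≠ k - 1 and a (k-i-1) = 1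
    have hne : k - i - 1 ≠ k - 1 := by
      intro hEq
      apply hA
      simp only [modLast]
      rw [if_pos hEq]
    have hige : 1 ≤ i := by omega
    obtain ⟨m, hpre, hm⟩ := hrev i hi
    have hm' : (if m ≤ k - i - 2 then a (k - i - 1 - m) else 0) <
        (if m < k then a m else 0) := hm
    have hmk : m < k := by
      by_contra hmk
      rw [if_neg (by omega : ¬ m < k)] at hm'
      exact Nat.not_lt_zero _ hm'
    have hmle : m ≤ k - 2 := by
      by_contra hmle
      have hmeq : m = k - 1 := by omega
      have ha1 : a (k - i - 1) = 1 := by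
        have hA' : ¬ (if k - i - 1 = k - 1 then 0 else a (k - i - 1)) = 0 := hA
        rw [if_neg hne] at hA'
        have := hdig (k - i - 1)
        omega
      have hj : (if k - i - 1 ≤ k - i - 2 then a (k - i - 1 - (k - i - 1)) else 0) =
          (if k - i - 1 < k then a (k - i - 1) else 0) := hpre (k - i - 1) (by omega)
      rw [if_neg (by omega : ¬ k - i - 1 ≤ k - i - 2),
        if_pos (by omega : k - i - 1 < k), ha1] at hj
      omega
    refine ⟨m, ?_, ?_⟩
    · intro j hj
      have hj' : (if j ≤ k - i - 2 then a (k - i - 1 - j) else 0) =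
          (if j < k then a j else 0) := hpre j hj
      show (if j ≤ k - i - 2 then modLast a k (k - i - 1 - j) else 0) =
        (if j < k then modLast a k j else 0)
      simp only [modLast]
      rw [if_neg (by omega : k - i - 1 - j ≠ k - 1), if_neg (by omega : j ≠ k - 1)]
      exact hj'
    · show (if m ≤ k - i - 2 then modLast a k (k - i - 1 - m) else 0) <
        (if m < k then modLast a k m else 0)
      simp only [modLast]
      rw [if_neg (by omega : k - i - 1 - m ≠ k - 1), if_neg (by omega : m ≠ k - 1)]
      exact hm'
end

section
/- Let a = (a_n)_{n≥1} be a sequence with a_n ∈ {0,1} which is eventually periodic with preperiod k and period ℓ, i.e. a_{n+ℓ} = a_n for all n > k. If σ^j(a) <_lex a for every j with 1 ≤ j ≤ k+ℓ, then σ^j(a) <_lex a for every j ≥ 1, where σ(a_1a_2a_3…) = a_2a_3…. -/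
open Polynomial

/-- for an eventually periodic {0,1}-sequence with preperiod `k` and
period `ℓ`, it suffices to check the Parry condition `σ^j(a) <_lex a` for
`1 ≤ j ≤ k + ℓ` in order to get it for all `j ≥ 1`. -/
theorem stmt2 (a : ℕ → ℕ) (hdig : ∀ n, a n ≤ 1) (k ℓ : ℕ) (hℓ : 1 ≤ ℓ)
    (hper : ∀ n, k ≤ n → a (n + ℓ) = a n)
    (h : ∀ j : ℕ, 1 ≤ j → j ≤ k + ℓ → LexLt (shiftSeq^[j] a) a) :
    ∀ j : ℕ, 1 ≤ j → LexLt (shiftSeq^[j] a) a := by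
  have hiter : ∀ j n, shiftSeq^[j] a n = a (n + j) := by
    intro j
    induction j with
    | zero => simp
    | succ j ih =>
      intro n
      rw [Function.iterate_succ_apply', shiftSeq, ih]
      congr 1
      omega
  intro j
  induction j using Nat.strong_induction_on with
  | _ j ih =>
    intro hj
    by_cases hc : j ≤ k + ℓ
    · exact h j hj hc
    · have heq : shiftSeq^[j] a = shiftSeq^[j - ℓ] a := by
        funext n
        rw [hiter, hiter]
        have e : n + j = (n + (j - ℓ)) + ℓ := by omega
        rw [e, hper _ (by omega)]
      rw [heq]
      exact ih (j - ℓ) (by omega) (by omega)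
end

section
/- Let β > 1 be a real number. If for every rational x ∈ [0,1) the greedy β-expansion of x (with digits d_n = ⌊β T_β^{n−1}(x)⌋ where T_β(y) = βy − ⌊βy⌋) is finite or eventually periodic, then β is a Pisot number or a Salem number. -/
open Polynomial

namespace S6

variable {β : ℝ}

variable {β : ℝ}

lemma betaT_eq_fract (β y : ℝ) : betaT β y = Int.fract (β * y) := rfl

lemma greedyDigit_def (β x : ℝ) (n : ℕ) :
    greedyDigit β x n = ⌊β * (betaT β)^[n] x⌋ := rfl

lemma iter_mem {x : ℝ} (hx0 : 0 ≤ x) (hx1 : x < 1) :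
    ∀ n, 0 ≤ (betaT β)^[n] x ∧ (betaT β)^[n] x < 1
  | 0 => ⟨hx0, hx1⟩
  | (n+1) => by
      rw [Function.iterate_succ_apply', betaT_eq_fract]
      exact ⟨Int.fract_nonneg _, Int.fract_lt_one _⟩

lemma digit_nonneg (hβ : 1 < β) {x : ℝ} (hx0 : 0 ≤ x) (hx1 : x < 1) (n : ℕ) :
    0 ≤ greedyDigit β x n :=
  Int.floor_nonneg.2 (mul_nonneg (by linarith) (iter_mem hx0 hx1 n).1)

lemma digit_le (hβ : 1 < β) {x : ℝ} (hx0 : 0 ≤ x) (hx1 : x < 1) (n : ℕ) :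
    (greedyDigit β x n : ℝ) ≤ β := by
  have h1 : (greedyDigit β x n : ℝ) ≤ β * (betaT β)^[n] x := Int.floor_le _
  have h2 : β * (betaT β)^[n] x ≤ β * 1 :=
    mul_le_mul_of_nonneg_left (iter_mem hx0 hx1 n).2.le (by linarith)
  linarith

lemma iterate_succ_eq (β x : ℝ) (n : ℕ) :
    (betaT β)^[n+1] x = β * (betaT β)^[n] x - (greedyDigit β x n : ℝ) := by
  rw [Function.iterate_succ_apply']; rfl

lemma digit_shift (β x : ℝ) (k n : ℕ) :
    greedyDigit β ((betaT β)^[k] x) n = greedyDigit β x (n + k) := by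
  simp [greedyDigit_def, Function.iterate_add_apply]

lemma partial_real (hβ : 1 < β) (x : ℝ) :
    ∀ n, x - ∑ i ∈ Finset.range n, (greedyDigit β x i : ℝ) * (β ^ (i+1))⁻¹
      = (betaT β)^[n] x / β ^ n := by
  have hβ0 : (0:ℝ) < β := by linarith
  intro n
  induction n with
  | zero => simp
  | succ n ih =>
    rw [Finset.sum_range_succ, iterate_succ_eq]
    have hpow : (β : ℝ) ^ (n+1) ≠ 0 := by positivity
    have hpow' : (β : ℝ) ^ n ≠ 0 := by positivity
    have : x - (∑ i ∈ Finset.range n, (greedyDigit β x i : ℝ) * (β ^ (i+1))⁻¹ +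
        (greedyDigit β x n : ℝ) * (β ^ (n+1))⁻¹)
        = (betaT β)^[n] x / β ^ n - (greedyDigit β x n : ℝ) * (β ^ (n+1))⁻¹ := by
      rw [← ih]; ring
    rw [this, pow_succ]
    field_simp

variable {β : ℝ}

lemma eq_of_digits_eq (hβ : 1 < β) {u w : ℝ} (hu0 : 0 ≤ u) (hu1 : u < 1)
    (hw0 : 0 ≤ w) (hw1 : w < 1)
    (hd : ∀ n, greedyDigit β u n = greedyDigit β w n) : u = w := by
  have hβ0 : (0:ℝ) < β := by linarith
  have key : ∀ n : ℕ, |u - w| ≤ (β ^ n)⁻¹ := by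
    intro n
    have h1 := partial_real hβ u n
    have h2 := partial_real hβ w n
    have hsum : ∑ i ∈ Finset.range n, (greedyDigit β u i : ℝ) * (β ^ (i+1))⁻¹
        = ∑ i ∈ Finset.range n, (greedyDigit β w i : ℝ) * (β ^ (i+1))⁻¹ := by
      refine Finset.sum_congr rfl fun i _ => by rw [hd i]
    have hdiff : u - w = ((betaT β)^[n] u - (betaT β)^[n] w) / β ^ n := by
      rw [sub_div]; linarith [h1, h2, hsum]
    rw [hdiff, abs_div, abs_of_pos (pow_pos hβ0 n), div_le_iff₀ (pow_pos hβ0 n),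
      inv_mul_cancel₀ (ne_of_gt (pow_pos hβ0 n))]
    have hu := iter_mem hu0 hu1 (β := β) n
    have hw := iter_mem hw0 hw1 (β := β) n
    rw [abs_le]
    constructor <;> nlinarith [hu.1, hu.2, hw.1, hw.2]
  by_contra hne
  have habs : 0 < |u - w| := abs_pos.2 (sub_ne_zero.2 hne)
  obtain ⟨n, hn⟩ := pow_unbounded_of_one_lt (|u - w|)⁻¹ hβ
  have := key n
  have h2 : (β ^ n)⁻¹ < |u - w| := by
    rw [inv_lt_comm₀ (pow_pos hβ0 n) habs] at *
    · exact hn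
  linarith

lemma betaT_zero (β : ℝ) : betaT β 0 = 0 := by simp [betaT]

lemma digits_zero (β : ℝ) (n : ℕ) : greedyDigit β 0 n = 0 := by
  have : ∀ n, (betaT β)^[n] (0:ℝ) = 0 := by
    intro n; induction n with
    | zero => rfl
    | succ n ih => rw [Function.iterate_succ_apply', ih, betaT_zero]
  simp [greedyDigit_def, this]

lemma exists_period (hβ : 1 < β) {x : ℝ} (hx0 : 0 ≤ x) (hx1 : x < 1)
    (hcase : (∃ k : ℕ, ∀ n, k ≤ n → greedyDigit β x n = 0) ∨
      (∃ k ℓ : ℕ, 1 ≤ ℓ ∧ ∀ n, k ≤ n →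
        greedyDigit β x (n + ℓ) = greedyDigit β x n)) :
    ∃ k ℓ, 1 ≤ ℓ ∧ (betaT β)^[k+ℓ] x = (betaT β)^[k] x := by
  rcases hcase with ⟨k, hk⟩ | ⟨k, ℓ, hℓ, hper⟩
  · refine ⟨k, 1, le_rfl, ?_⟩
    have hu := iter_mem hx0 hx1 (β := β) k
    have hzero : (betaT β)^[k] x = 0 := by
      refine eq_of_digits_eq hβ hu.1 hu.2 le_rfl one_pos fun n => ?_
      rw [digit_shift, digits_zero]
      exact hk _ (Nat.le_add_left _ _)
    rw [show k + 1 = 1 + k by ring, Function.iterate_add_apply, hzero]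
    simp [betaT_zero, hzero]
  · refine ⟨k, ℓ, hℓ, ?_⟩
    have hu := iter_mem hx0 hx1 (β := β) k
    have hw := iter_mem hx0 hx1 (β := β) (k + ℓ)
    refine eq_of_digits_eq hβ hw.1 hw.2 hu.1 hu.2 fun n => ?_
    rw [digit_shift, digit_shift]
    have : n + (k + ℓ) = (n + k) + ℓ := by ring
    rw [this]
    exact hper (n + k) (Nat.le_add_left _ _)

lemma iterate_period {x : ℝ} {k ℓ : ℕ}
    (h : (betaT β)^[k+ℓ] x = (betaT β)^[k] x) :
    ∀ m, (betaT β)^[k + m*ℓ] x = (betaT β)^[k] x := by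
  intro m
  induction m with
  | zero => simp
  | succ m ih =>
    have : k + (m+1)*ℓ = ℓ + (k + m*ℓ) := by ring
    rw [this, Function.iterate_add_apply, ih, ← Function.iterate_add_apply, ← h]
    congr 1; ring

variable {β : ℝ}


noncomputable def polSeq (β : ℝ) (x : ℚ) : ℕ → Polynomial ℚ
  | 0 => C x
  | (n+1) => X * polSeq β x n - C ((greedyDigit β (x : ℝ) n : ℚ))

noncomputable def Spart (β : ℝ) (z : ℂ) (u : ℝ) (n : ℕ) : ℂ :=
  ∑ i ∈ Finset.range n, (greedyDigit β u i : ℂ) * (z ^ (i+1))⁻¹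

lemma aeval_polSeq_real (β : ℝ) (x : ℚ) :
    ∀ n, aeval β (polSeq β x n) = (betaT β)^[n] (x : ℝ)
  | 0 => by simp [polSeq]
  | (n+1) => by
    rw [polSeq, map_sub, map_mul, aeval_X, aeval_C, aeval_polSeq_real β x n,
      iterate_succ_eq, eq_ratCast]
    push_cast
    ring

lemma aeval_polSeq_complex (β : ℝ) (x : ℚ) {z : ℂ} (hz : z ≠ 0) :
    ∀ n, aeval z (polSeq β x n) = z ^ n * (((x:ℝ) : ℂ) - Spart β z (x : ℝ) n)
  | 0 => by
    simp [polSeq, Spart, eq_ratCast]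
  | (n+1) => by
    have hS : Spart β z (x : ℝ) (n+1)
        = Spart β z (x : ℝ) n + (greedyDigit β (x:ℝ) n : ℂ) * (z ^ (n+1))⁻¹ :=
      Finset.sum_range_succ _ _
    rw [polSeq, map_sub, map_mul, aeval_X, aeval_C, aeval_polSeq_complex β x hz n,
      hS, eq_ratCast]
    have hp : (z : ℂ) ^ (n+1) ≠ 0 := pow_ne_zero _ hz
    push_cast
    field_simp
    ring

noncomputable def polSeqInt (β : ℝ) : ℕ → Polynomial ℤ
  | 0 => C 1
  | (n+1) => X * polSeqInt β n - C (2 * greedyDigit β (((1:ℚ)/2 : ℚ) : ℝ) n)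

lemma polSeqInt_monic (β : ℝ) :
    ∀ n, (polSeqInt β n).Monic ∧ (polSeqInt β n).degree = (n : WithBot ℕ)
  | 0 => by constructor <;> simp [polSeqInt, monic_one]
  | (n+1) => by
    obtain ⟨hm, hd⟩ := polSeqInt_monic β n
    have hmx : (X * polSeqInt β n).Monic := (monic_X).mul hm
    have hdx : (X * polSeqInt β n).degree = ((n+1 : ℕ) : WithBot ℕ) := by
      rw [degree_mul, degree_X, hd]
      norm_cast
      omega
    have hlt : (C (2 * greedyDigit β (((1:ℚ)/2 : ℚ) : ℝ) n) : Polynomial ℤ).degree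
        < (X * polSeqInt β n).degree := by
      rw [hdx]
      refine lt_of_le_of_lt degree_C_le ?_
      exact_mod_cast Nat.succ_pos n
    constructor
    · rw [polSeqInt, sub_eq_add_neg]
      exact hmx.add_of_left (by rwa [degree_neg])
    · rw [polSeqInt, sub_eq_add_neg,
        degree_add_eq_left_of_degree_lt (by rwa [degree_neg]), hdx]

lemma aeval_polSeqInt (β : ℝ) :
    ∀ n, aeval β (polSeqInt β n) = 2 * (betaT β)^[n] (((1:ℚ)/2 : ℚ) : ℝ)
  | 0 => by norm_num [polSeqInt]
  | (n+1) => by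
    rw [polSeqInt, map_sub, map_mul, aeval_X, aeval_C, aeval_polSeqInt β n,
      iterate_succ_eq, eq_intCast]
    push_cast
    ring

lemma isIntegral_of_period
    (hhalf : ∃ k ℓ, 1 ≤ ℓ ∧
      (betaT β)^[k+ℓ] (((1:ℚ)/2 : ℚ) : ℝ) = (betaT β)^[k] (((1:ℚ)/2 : ℚ) : ℝ)) :
    IsIntegral ℤ β := by
  obtain ⟨k, ℓ, hℓ, heq⟩ := hhalf
  refine ⟨polSeqInt β (k+ℓ) - polSeqInt β k, ?_, ?_⟩
  · obtain ⟨hm1, hd1⟩ := polSeqInt_monic β (k+ℓ)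
    obtain ⟨hm2, hd2⟩ := polSeqInt_monic β k
    rw [sub_eq_add_neg]
    refine hm1.add_of_left ?_
    rw [degree_neg, hd1, hd2]
    exact_mod_cast (by omega : k < k + ℓ)
  · rw [← aeval_def, map_sub, aeval_polSeqInt, aeval_polSeqInt, heq, sub_self]

variable {β : ℝ}

lemma digit_stable (hβ : 1 < β) (u : ℝ) :
    ∀ m : ℕ, ∃ δ > (0:ℝ), ∀ u', u ≤ u' → u' < u + δ →
      (∀ i ≤ m, (betaT β)^[i] u' = (betaT β)^[i] u + β ^ i * (u' - u)) ∧
      (∀ i < m, greedyDigit β u' i = greedyDigit β u i)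
  | 0 => by
    refine ⟨1, one_pos, fun u' h1 h2 => ⟨fun i hi => ?_, fun i hi => absurd hi (Nat.not_lt_zero i)⟩⟩
    interval_cases i
    simp
  | (m+1) => by
    have hβ0 : (0:ℝ) < β := by linarith
    obtain ⟨δ, hδ, hind⟩ := digit_stable hβ u m
    set t := β * (betaT β)^[m] u with ht
    have hflt : t < ↑⌊t⌋ + 1 := Int.lt_floor_add_one t
    have hppos : (0:ℝ) < β ^ (m+1) := pow_pos hβ0 _
    refine ⟨min δ ((↑⌊t⌋ + 1 - t) / β ^ (m+1)),
      lt_min hδ (div_pos (by linarith) hppos), fun u' h1 h2 => ?_⟩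
    have h2δ : u' < u + δ :=
      lt_of_lt_of_le h2 (add_le_add_right (min_le_left _ _) u)
    obtain ⟨hit, hdig⟩ := hind u' h1 h2δ
    have hs0 : 0 ≤ β ^ (m+1) * (u' - u) := by
      have := sub_nonneg.2 h1; positivity
    have hs1 : β ^ (m+1) * (u' - u) < ↑⌊t⌋ + 1 - t := by
      have h2' : u' - u < (↑⌊t⌋ + 1 - t) / β ^ (m+1) :=
        lt_of_lt_of_le (by linarith) (min_le_right δ _)
      calc β ^ (m+1) * (u' - u) < β ^ (m+1) * ((↑⌊t⌋ + 1 - t) / β ^ (m+1)) := by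
            exact mul_lt_mul_of_pos_left h2' hppos
        _ = ↑⌊t⌋ + 1 - t := by field_simp
    have hTm : β * (betaT β)^[m] u' = t + β ^ (m+1) * (u' - u) := by
      rw [hit m le_rfl, ht, pow_succ]; ring
    have hfloor : ⌊β * (betaT β)^[m] u'⌋ = ⌊t⌋ := by
      rw [hTm]
      exact Int.floor_eq_iff.2 ⟨by linarith [Int.floor_le t], by linarith⟩
    constructor
    · intro i hi
      rcases Nat.le_iff_lt_or_eq.1 hi with hlt | heq
      · exact hit i (Nat.lt_succ_iff.1 hlt)
      · subst heq
        rw [Function.iterate_succ_apply', Function.iterate_succ_apply']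
        show β * (betaT β)^[m] u' - ↑⌊β * (betaT β)^[m] u'⌋
            = β * (betaT β)^[m] u - ↑⌊β * (betaT β)^[m] u⌋ + β ^ (m+1) * (u' - u)
        rw [hfloor, hTm, ← ht]
        ring
    · intro i hi
      rcases Nat.lt_succ_iff_lt_or_eq.1 hi with hlt | heq
      · exact hdig i hlt
      · subst heq
        rw [greedyDigit_def, greedyDigit_def, hfloor, ht]

variable {β : ℝ}


lemma le_of_forall_eps {a b : ℝ} (h : ∀ ε > (0:ℝ), a ≤ b + ε) : a ≤ b :=
  le_of_forall_pos_lt_add fun ε hε =>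
    lt_of_le_of_lt (h (ε/2) (by linarith)) (by linarith)

lemma geom_range_le {r : ℝ} (hr0 : 0 ≤ r) (hr1 : r < 1) (N : ℕ) :
    ∑ j ∈ Finset.range N, r ^ j ≤ (1 - r)⁻¹ := by
  have h1 : (0:ℝ) < 1 - r := by linarith
  rw [geom_sum_eq (by linarith : r ≠ 1)]
  rw [show (r ^ N - 1) / (r - 1) = (1 - r ^ N) / (1 - r) by
    rw [div_eq_div_iff (by linarith) (by linarith)]; ring]
  rw [div_le_iff₀ h1, inv_mul_cancel₀ (ne_of_gt h1)]
  have := pow_nonneg hr0 N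
  linarith

lemma conj_eq (hβ : 1 < β)
    (hP : ∀ x : ℚ, 0 ≤ (x:ℝ) → (x:ℝ) < 1 →
      ∃ k ℓ, 1 ≤ ℓ ∧ (betaT β)^[k+ℓ] ((x:ℚ) : ℝ) = (betaT β)^[k] ((x:ℚ) : ℝ))
    {z : ℂ} (hzr : aeval z (minpoly ℚ β) = 0) (hz1 : 1 < ‖z‖) :
    z = (β : ℂ) := by
  have hβ0 : (0:ℝ) < β := by linarith
  have hz0 : z ≠ 0 := by
    intro h; rw [h] at hz1; simp at hz1; linarith
  set r : ℝ := (‖z‖)⁻¹ with hr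
  have hzpos : (0:ℝ) < ‖z‖ := by linarith
  have hr0 : 0 ≤ r := inv_nonneg.2 hzpos.le
  have hr1 : r < 1 := inv_lt_one_of_one_lt₀ hz1
  have h1r : (0:ℝ) < 1 - r := by linarith
  set tail : ℕ → ℝ := fun m => β * ((1 - r)⁻¹ * r ^ m) with htail
  have htail0 : ∀ m, 0 ≤ tail m := by
    intro m; have : (0:ℝ) ≤ (1-r)⁻¹ := by positivity
    positivity
  -- transfer of iterate equality to ℂ
  have transfer : ∀ (x : ℚ) (n₁ n₂ : ℕ),
      (betaT β)^[n₁] ((x:ℚ):ℝ) = (betaT β)^[n₂] ((x:ℚ):ℝ) →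
      z ^ n₁ * (((x:ℝ):ℂ) - Spart β z (x:ℝ) n₁)
        = z ^ n₂ * (((x:ℝ):ℂ) - Spart β z (x:ℝ) n₂) := by
    intro x n₁ n₂ hT
    have h0 : aeval β (polSeq β x n₁ - polSeq β x n₂) = 0 := by
      rw [map_sub, aeval_polSeq_real, aeval_polSeq_real, hT, sub_self]
    obtain ⟨c, hc⟩ := minpoly.dvd ℚ β h0
    have h2 : aeval z (polSeq β x n₁ - polSeq β x n₂) = 0 := by
      rw [hc, map_mul, hzr, zero_mul]
    rw [map_sub, aeval_polSeq_complex β x hz0, aeval_polSeq_complex β x hz0,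
      sub_eq_zero] at h2
    exact h2
  -- cauchy-type bound
  have cauchy : ∀ (u : ℝ), 0 ≤ u → u < 1 → ∀ m n : ℕ, m ≤ n →
      ‖Spart β z u n - Spart β z u m‖ ≤ tail m := by
    intro u hu0 hu1 m n hmn
    have hsub : Spart β z u n - Spart β z u m
        = ∑ i ∈ Finset.Ico m n, (greedyDigit β u i : ℂ) * (z ^ (i+1))⁻¹ := by
      rw [Spart, Spart, Finset.sum_Ico_eq_sub _ hmn]
    rw [hsub]
    calc ‖∑ i ∈ Finset.Ico m n, (greedyDigit β u i : ℂ) * (z ^ (i+1))⁻¹‖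
        ≤ ∑ i ∈ Finset.Ico m n, ‖(greedyDigit β u i : ℂ) * (z ^ (i+1))⁻¹‖ := by
          exact norm_sum_le _ _
      _ ≤ ∑ i ∈ Finset.Ico m n, β * r ^ (i+1) := by
          refine Finset.sum_le_sum fun i _ => ?_
          rw [norm_mul, norm_inv, norm_pow]
          have hd1 : ‖(greedyDigit β u i : ℂ)‖ ≤ β := by
            rw [show ((greedyDigit β u i : ℤ) : ℂ) = (((greedyDigit β u i : ℤ) : ℝ) : ℂ) by push_cast; ring,
              Complex.norm_real, Real.norm_eq_abs, abs_of_nonneg (by exact_mod_cast digit_nonneg hβ hu0 hu1 i)]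
            exact digit_le hβ hu0 hu1 i
          have : ((‖z‖) ^ (i+1))⁻¹ = r ^ (i+1) := by
            rw [hr, inv_pow]
          rw [this]
          exact mul_le_mul_of_nonneg_right hd1 (by positivity)
      _ = β * ∑ i ∈ Finset.Ico m n, r ^ (i+1) := by rw [Finset.mul_sum]
      _ ≤ β * ((1 - r)⁻¹ * r ^ m) := by
          refine mul_le_mul_of_nonneg_left ?_ hβ0.le
          rw [Finset.sum_Ico_eq_sum_range]
          have : ∀ j ∈ Finset.range (n - m), r ^ (m + j + 1) = r ^ (m+1) * r ^ j := by
            intro j _; rw [← pow_add]; congr 1; ring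
          rw [Finset.sum_congr rfl this, ← Finset.mul_sum]
          calc r ^ (m+1) * ∑ j ∈ Finset.range (n-m), r ^ j
              ≤ r ^ (m+1) * (1-r)⁻¹ := by
                refine mul_le_mul_of_nonneg_left (geom_range_le hr0 hr1 _) (by positivity)
            _ ≤ r ^ m * (1-r)⁻¹ := by
                refine mul_le_mul_of_nonneg_right ?_ (by positivity)
                exact pow_le_pow_of_le_one hr0 hr1.le (Nat.le_succ m)
            _ = (1-r)⁻¹ * r ^ m := by ring
  -- main approximation for rationals
  have approx : ∀ (x : ℚ), 0 ≤ (x:ℝ) → (x:ℝ) < 1 → ∀ m : ℕ,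
      ‖((x:ℝ):ℂ) - Spart β z (x:ℝ) m‖ ≤ tail m := by
    intro x hx0 hx1 m
    obtain ⟨k, ℓ, hℓ, hper⟩ := hP x hx0 hx1
    have hiter := iterate_period hper
    have keyn : ∀ j : ℕ, z ^ (k + j*ℓ) * (((x:ℝ):ℂ) - Spart β z (x:ℝ) (k + j*ℓ))
        = z ^ k * (((x:ℝ):ℂ) - Spart β z (x:ℝ) k) := by
      intro j; exact transfer x _ _ (hiter j)
    set K : ℝ := ‖z ^ k * (((x:ℝ):ℂ) - Spart β z (x:ℝ) k)‖ with hK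
    have habs : ∀ j : ℕ, ‖((x:ℝ):ℂ) - Spart β z (x:ℝ) (k + j*ℓ)‖
        = K * r ^ (k + j*ℓ) := by
      intro j
      have := congrArg norm (keyn j)
      rw [norm_mul, norm_pow] at this
      rw [hK, ← this, hr, inv_pow]
      field_simp
    refine le_of_forall_eps fun ε hε => ?_
    obtain ⟨j0, hj0⟩ : ∃ j0 : ℕ, K * r ^ j0 < ε := by
      rcases eq_or_lt_of_le (norm_nonneg _ : 0 ≤ K) with hK0 | hK0
      · refine ⟨0, ?_⟩
        rw [pow_zero, mul_one, hK, ← hK0]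
        exact hε
      · obtain ⟨j0, hj0⟩ := exists_pow_lt_of_lt_one (div_pos hε hK0) hr1
        exact ⟨j0, by rw [← lt_div_iff₀' hK0]; exact hj0⟩
    set n := k + (m + j0) * ℓ with hn
    have hmn : m ≤ n := by
      have h1 : m + j0 ≤ (m + j0) * ℓ := Nat.le_mul_of_pos_right _ hℓ
      omega
    have hj0n : j0 ≤ n := by
      have h1 : m + j0 ≤ (m + j0) * ℓ := Nat.le_mul_of_pos_right _ hℓ
      omega
    calc ‖((x:ℝ):ℂ) - Spart β z (x:ℝ) m‖
        ≤ ‖((x:ℝ):ℂ) - Spart β z (x:ℝ) n‖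
          + ‖Spart β z (x:ℝ) n - Spart β z (x:ℝ) m‖ := by
          rw [show ((x:ℝ):ℂ) - Spart β z (x:ℝ) m
            = (((x:ℝ):ℂ) - Spart β z (x:ℝ) n) + (Spart β z (x:ℝ) n - Spart β z (x:ℝ) m) by ring]
          exact norm_add_le _ _
      _ ≤ K * r ^ n + tail m := by
          refine add_le_add ?_ (cauchy _ hx0 hx1 m n hmn)
          rw [habs (m + j0)]
      _ ≤ tail m + ε := by
          have : K * r ^ n ≤ K * r ^ j0 := by
            refine mul_le_mul_of_nonneg_left ?_ (norm_nonneg _)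
            exact pow_le_pow_of_le_one hr0 hr1.le hj0n
          linarith
  -- approximation for arbitrary reals in (0,1)
  have approx' : ∀ u : ℝ, 0 < u → u < 1 → ∀ m : ℕ,
      ‖(u:ℂ) - Spart β z u m‖ ≤ tail m := by
    intro u hu0 hu1 m
    refine le_of_forall_eps fun ε hε => ?_
    obtain ⟨δ, hδ, hst⟩ := digit_stable hβ u m
    have hlt : u < min (u + δ) (min 1 (u + ε)) :=
      lt_min (by linarith) (lt_min hu1 (by linarith))
    obtain ⟨y, hy1, hy2⟩ := exists_rat_btwn hlt
    have hy2δ : (y:ℝ) < u + δ := lt_of_lt_of_le hy2 (le_trans (min_le_left _ _) le_rfl)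
    have hy2' : (y:ℝ) < 1 := lt_of_lt_of_le hy2 (le_trans (min_le_right _ _) (min_le_left _ _))
    have hy2ε : (y:ℝ) < u + ε := lt_of_lt_of_le hy2 (le_trans (min_le_right _ _) (min_le_right _ _))
    have hy0 : 0 ≤ (y:ℝ) := le_trans hu0.le hy1.le
    obtain ⟨-, hdig⟩ := hst (y:ℝ) hy1.le hy2δ
    have hSeq : Spart β z ((y:ℚ):ℝ) m = Spart β z u m := by
      rw [Spart, Spart]
      refine Finset.sum_congr rfl fun i hi => ?_
      rw [hdig i (Finset.mem_range.1 hi)]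
    have h1 := approx y hy0 hy2' m
    rw [hSeq] at h1
    calc ‖(u:ℂ) - Spart β z u m‖
        ≤ ‖(u:ℂ) - ((y:ℝ):ℂ)‖ + ‖((y:ℝ):ℂ) - Spart β z u m‖ := by
          rw [show (u:ℂ) - Spart β z u m
            = ((u:ℂ) - ((y:ℝ):ℂ)) + (((y:ℝ):ℂ) - Spart β z u m) by ring]
          exact norm_add_le _ _
      _ ≤ ε + tail m := by
          refine add_le_add ?_ h1
          rw [← Complex.ofReal_sub, Complex.norm_real, Real.norm_eq_abs, abs_of_nonpos (by linarith)]
          linarith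
      _ = tail m + ε := by ring
  -- choose x₀
  obtain ⟨x₀, hx₀1, hx₀2⟩ := exists_rat_btwn (show (0:ℝ) < 1/β by positivity)
  have hx₀pos : 0 < (x₀:ℝ) := hx₀1
  set v : ℝ := β * (x₀:ℝ) with hv
  have hv0 : 0 < v := by positivity
  have hv1 : v < 1 := by
    rw [hv]
    calc β * (x₀:ℝ) < β * (1/β) := mul_lt_mul_of_pos_left hx₀2 hβ0
      _ = 1 := by field_simp
  have hx₀lt1 : (x₀:ℝ) < 1 := by
    calc (x₀:ℝ) < 1/β := hx₀2
      _ < 1 := by rw [div_lt_one hβ0]; exact hβ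
  have hd0 : greedyDigit β (x₀:ℝ) 0 = 0 := by
    rw [show greedyDigit β (x₀:ℝ) 0 = ⌊β * (x₀:ℝ)⌋ from rfl]
    exact Int.floor_eq_zero_iff.2 ⟨hv0.le, hv1⟩
  have hT1 : betaT β (x₀:ℝ) = v := by
    rw [show betaT β (x₀:ℝ) = β * (x₀:ℝ) - ↑⌊β * (x₀:ℝ)⌋ from rfl]
    rw [show ⌊β * (x₀:ℝ)⌋ = 0 from hd0]
    simp [hv]
  have hshift : ∀ i, greedyDigit β (x₀:ℝ) (i+1) = greedyDigit β v i := by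
    intro i
    show ⌊β * (betaT β)^[i+1] (x₀:ℝ)⌋ = ⌊β * (betaT β)^[i] v⌋
    rw [Function.iterate_succ_apply, hT1]
  have hSrel : ∀ m, Spart β z (x₀:ℝ) (m+1) = z⁻¹ * Spart β z v m := by
    intro m
    rw [Spart, Finset.sum_range_succ']
    have h0 : ((greedyDigit β (x₀:ℝ) 0 : ℤ) : ℂ) * (z ^ (0+1))⁻¹ = 0 := by
      rw [hd0]; simp
    rw [h0, add_zero, Spart, Finset.mul_sum]
    refine Finset.sum_congr rfl fun i _ => ?_
    rw [hshift i]
    rw [show z ^ (i+1+1) = z * z ^ (i+1) by ring]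
    rw [mul_inv]
    ring
  -- final computation
  have hfinal : ((v:ℝ):ℂ) = z * ((x₀:ℝ):ℂ) := by
    have hbound : ∀ m : ℕ, ‖((v:ℝ):ℂ) - z * ((x₀:ℝ):ℂ)‖ ≤ 2 * tail m := by
      intro m
      have h1 := approx' v hv0 hv1 m
      have h2 := approx x₀ hx₀pos.le hx₀lt1 (m+1)
      have h3 : Spart β z v m = z * Spart β z (x₀:ℝ) (m+1) := by
        rw [hSrel m, ← mul_assoc, mul_inv_cancel₀ hz0, one_mul]
      calc ‖((v:ℝ):ℂ) - z * ((x₀:ℝ):ℂ)‖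
          ≤ ‖((v:ℝ):ℂ) - Spart β z v m‖
            + ‖Spart β z v m - z * ((x₀:ℝ):ℂ)‖ := by
            rw [show ((v:ℝ):ℂ) - z * ((x₀:ℝ):ℂ)
              = (((v:ℝ):ℂ) - Spart β z v m) + (Spart β z v m - z * ((x₀:ℝ):ℂ)) by ring]
            exact norm_add_le _ _
        _ ≤ tail m + ‖z‖ * tail (m+1) := by
            refine add_le_add h1 ?_
            rw [h3, ← mul_sub, norm_mul]
            refine mul_le_mul_of_nonneg_left ?_ (norm_nonneg z)
            rw [norm_sub_rev]
            exact h2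
        _ ≤ 2 * tail m := by
            have hzr1 : ‖z‖ * r = 1 := mul_inv_cancel₀ (ne_of_gt hzpos)
            have heq1 : ‖z‖ * tail (m+1) = tail m := by
              simp only [htail]
              calc ‖z‖ * (β * ((1-r)⁻¹ * r ^ (m+1)))
                  = (‖z‖ * r) * (β * ((1-r)⁻¹ * r ^ m)) := by
                    rw [pow_succ]; ring
                _ = β * ((1-r)⁻¹ * r ^ m) := by rw [hzr1, one_mul]
            linarith [htail0 m]
    -- conclude
    by_contra hne
    have hpos : 0 < ‖((v:ℝ):ℂ) - z * ((x₀:ℝ):ℂ)‖ := by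
      rw [norm_pos_iff]
      exact sub_ne_zero.2 hne
    have hC : (0:ℝ) < 2 * (β * (1-r)⁻¹) := by positivity
    obtain ⟨m, hm⟩ := exists_pow_lt_of_lt_one
      (div_pos hpos hC) hr1
    have hb := hbound m
    have hle : 2 * tail m = (2 * (β * (1-r)⁻¹)) * r ^ m := by
      simp only [htail]; ring
    rw [hle] at hb
    rw [lt_div_iff₀' hC] at hm
    linarith
  -- wrap up
  have hxc : ((x₀:ℝ):ℂ) ≠ 0 := by
    rw [Complex.ofReal_ne_zero]
    exact ne_of_gt hx₀pos
  have : (β:ℂ) * ((x₀:ℝ):ℂ) = z * ((x₀:ℝ):ℂ) := by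
    rw [← hfinal, hv]
    push_cast
    ring
  have := mul_right_cancel₀ hxc this
  exact this.symm


end S6

/-- Schmidt: if for every rational `x ∈ [0,1)` the greedy β-expansion of
`x` (digits `d_n = ⌊β T_β^{n-1}(x)⌋`) is finite or eventually periodic, then `β` is a
Pisot or a Salem number. -/
theorem stmt6 (β : ℝ) (hβ : 1 < β)
    (h : ∀ x : ℚ, 0 ≤ x → x < 1 →
      (∃ k : ℕ, ∀ n, k ≤ n → greedyDigit β (x : ℝ) n = 0) ∨
      (∃ k ℓ : ℕ, 1 ≤ ℓ ∧ ∀ n, k ≤ n →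
        greedyDigit β (x : ℝ) (n + ℓ) = greedyDigit β (x : ℝ) n)) :
    IsPisot β ∨ IsSalem β := by
  have hP : ∀ x : ℚ, 0 ≤ (x:ℝ) → (x:ℝ) < 1 →
      ∃ k ℓ, 1 ≤ ℓ ∧ (betaT β)^[k+ℓ] ((x:ℚ) : ℝ) = (betaT β)^[k] ((x:ℚ) : ℝ) := by
    intro x hx0 hx1
    exact S6.exists_period hβ hx0 hx1 (h x (by exact_mod_cast hx0) (by exact_mod_cast hx1))
  have hInt : IsIntegral ℤ β :=
    S6.isIntegral_of_period (hP ((1:ℚ)/2) (by norm_num) (by norm_num))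
  have hmp : minpoly ℚ β = (minpoly ℤ β).map (algebraMap ℤ ℚ) :=
    minpoly.isIntegrallyClosed_eq_field_fractions ℚ ℝ hInt
  have hbig : ∀ z : ℂ, aeval z (minpoly ℤ β) = 0 → 1 < ‖z‖ → z = (β:ℂ) := by
    intro z hz h1
    refine S6.conj_eq hβ hP ?_ h1
    rw [hmp, aeval_map_algebraMap]
    exact hz
  have hle : ∀ z : ℂ, aeval z (minpoly ℤ β) = 0 → z ≠ (β:ℂ) → ‖z‖ ≤ 1 := by
    intro z hz hne
    by_contra hgt
    push_neg at hgt
    exact hne (hbig z hz hgt)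
  by_cases hex : ∃ z : ℂ, aeval z (minpoly ℤ β) = 0 ∧ ‖z‖ = 1
  · exact Or.inr ⟨hβ, hInt, hle, hex⟩
  · refine Or.inl ⟨hβ, hInt, fun z hz hne => ?_⟩
    rcases lt_or_eq_of_le (hle z hz hne) with hlt | heq
    · exact hlt
    · exact absurd ⟨z, hz, heq⟩ hex
end

section
/- Let r ≥ 1 and q ≥ 3r be integers, let M(x) = x^q(x^{r+1} − 2x^r + x − 1) − (x^r + 1)(x − 1) (a polynomial of degree q + r + 1), let M^*(x) = x^{q+r+1} M(1/x) be its reciprocal, and let Q(x) = 1 + x + ⋯ + x^{r−1}. Then (x^q − 1) divides Q(x)·(M(x)·x^{q−r+1} − M^*(x)) in ℤ[x]. -/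
open Polynomial

/-- `M(x) = Φ^{C-}_{(r,q)}(x) = x^q(x^{r+1} - 2x^r + x - 1) - (x^r + 1)(x - 1)`. -/
noncomputable def M18 (r q : ℕ) : Polynomial ℤ :=
  Polynomial.X ^ q *
      (Polynomial.X ^ (r + 1) - 2 * Polynomial.X ^ r + Polynomial.X - 1) -
    (Polynomial.X ^ r + 1) * (Polynomial.X - 1)

lemma refl_eq (t s : ℕ) :
    Polynomial.reflect (4*t+s+5) (M18 (t+1) (3*t+s+3)) =
      1 - 2*X + X^(t+1) - X^(t+2) - X^(3*t+s+3) + X^(3*t+s+4)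
        - X^(4*t+s+4) + X^(4*t+s+5) := by
  have h : M18 (t+1) (3*t+s+3) =
      C 1 * X^(4*t+s+5) - C 2 * X^(4*t+s+4) + C 1 * X^(3*t+s+4)
        - C 1 * X^(3*t+s+3) - C 1 * X^(t+2) + C 1 * X^(t+1)
        - C 1 * X^1 + C 1 * X^0 := by
    simp only [M18, map_one, map_ofNat]
    ring
  rw [h]
  simp only [reflect_sub, reflect_add, reflect_C_mul_X_pow]
  have h1 : (revAt (4*t+s+5)) (4*t+s+5) = 0 := by rw [revAt_le (by omega)]; omega
  have h2 : (revAt (4*t+s+5)) (4*t+s+4) = 1 := by rw [revAt_le (by omega)]; omega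
  have h3 : (revAt (4*t+s+5)) (3*t+s+4) = t+1 := by rw [revAt_le (by omega)]; omega
  have h4 : (revAt (4*t+s+5)) (3*t+s+3) = t+2 := by rw [revAt_le (by omega)]; omega
  have h5 : (revAt (4*t+s+5)) (t+2) = 3*t+s+3 := by rw [revAt_le (by omega)]; omega
  have h6 : (revAt (4*t+s+5)) (t+1) = 3*t+s+4 := by rw [revAt_le (by omega)]; omega
  have h7 : (revAt (4*t+s+5)) 1 = 4*t+s+4 := by rw [revAt_le (by omega)]; omega
  have h8 : (revAt (4*t+s+5)) 0 = 4*t+s+5 := by rw [revAt_le (by omega)]; omega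
  rw [h1, h2, h3, h4, h5, h6, h7, h8]
  simp only [map_one, map_ofNat]
  ring

lemma inner_dvd (t s : ℕ) :
    (X^(3*t+s+3) - 1 : Polynomial ℤ) ∣
      (M18 (t+1) (3*t+s+3) * X^(2*t+s+3)
        - Polynomial.reflect (4*t+s+5) (M18 (t+1) (3*t+s+3))) := by
  rw [refl_eq]
  refine ⟨1 - 2*X + X^(t+1) - X^(t+2) - X^(2*t+s+3) + X^(2*t+s+4)
      - 2*X^(3*t+s+4) + X^(3*t+s+5), ?_⟩
  simp only [M18]
  ring

/-- for `r ≥ 1` and `q ≥ 3r`, with `M = Φ^{C-}_{(r,q)}` (of degree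
`q + r + 1`), `M^*(x) = x^{q+r+1} M(1/x)` and `Q(x) = 1 + x + ⋯ + x^{r-1}`, the
polynomial `x^q - 1` divides `Q(x)·(M(x)·x^{q-r+1} - M^*(x))` in `ℤ[x]`. -/
theorem stmt18 (r q : ℕ) (hr : 1 ≤ r) (hq : 3 * r ≤ q) :
    (Polynomial.X ^ q - 1 : Polynomial ℤ) ∣
      ((∑ i ∈ Finset.range r, Polynomial.X ^ i) *
        (M18 r q * Polynomial.X ^ (q - r + 1) -
          Polynomial.reflect (q + r + 1) (M18 r q))) := by
  obtain ⟨s, rfl⟩ : ∃ s, q = 3 * r + s := ⟨q - 3*r, by omega⟩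
  obtain ⟨t, rfl⟩ : ∃ t, r = t + 1 := ⟨r - 1, by omega⟩
  have e1 : 3 * (t+1) + s = 3*t+s+3 := by omega
  have e2 : 3*t+s+3 - (t+1) + 1 = 2*t+s+3 := by omega
  have e3 : 3*t+s+3 + (t+1) + 1 = 4*t+s+5 := by omega
  rw [e1, e2, e3]
  exact Dvd.dvd.mul_left (inner_dvd t s) _
end
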